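/- Let f : A ⥤ B be a functor. Then f is a Grothendieck fibration if and only if the functor v_f : A ⥤ (B ↓ f), sending a to (f a, a, 1_{f a}), admits a right adjoint r such that the projection R f : (B ↓ f) ⥤ B composed with nothing changes: R f ∘ v_f = f, r is a functor over B (i.e. f ∘ r = R f), and the unit and counit of the adjunction are vertical over B (their images under f and R f respectively are identities). -/

import Mathlib

open CategoryTheory

universe v₁ v₂ u₁ u₂

variable {A : Type u₁} {B : Type u₂} [Category.{v₁} A] [Category.{v₂} B]

/-- `α : a' ⟶ a` is `f`-cartesian. -/
def IsCartesian (f : A ⥤ B) {a' a : A} (α : a' ⟶ a) : Prop :=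
  ∀ {y : A} (τ' : y ⟶ a) (g : f.obj y ⟶ f.obj a'),
    f.map τ' = g ≫ f.map α →
      ∃! τ : y ⟶ a', f.map τ = g ∧ τ ≫ α = τ'

/-- `f` is a Grothendieck fibration. -/
def IsGrothendieckFibration (f : A ⥤ B) : Prop :=
  ∀ (a : A) (b : B) (β : b ⟶ f.obj a),
    ∃ (a' : A) (α : a' ⟶ a) (h : f.obj a' = b),
      f.map α = eqToHom h ≫ β ∧ IsCartesian f α

/-- The unit functor `v_f : A ⥤ (B ↓ f)`, `a ↦ (f a, a, 𝟙 (f a))`. -/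
def vF (f : A ⥤ B) : A ⥤ Comma (𝟭 B) f where
  obj a := { left := f.obj a, right := a, hom := 𝟙 (f.obj a) }
  map u := { left := f.map u, right := u, w := by simp }

section Aux


variable (f : A ⥤ B)

/-- The lift provided by a cartesian arrow. -/
noncomputable def cartLift {a' a y : A} {α : a' ⟶ a} (hα : IsCartesian f α)
    (τ' : y ⟶ a) (g : f.obj y ⟶ f.obj a') (h : f.map τ' = g ≫ f.map α) : y ⟶ a' :=
  (hα τ' g h).choose

lemma cartLift_map {a' a y : A} {α : a' ⟶ a} (hα : IsCartesian f α)
    (τ' : y ⟶ a) (g : f.obj y ⟶ f.obj a') (h : f.map τ' = g ≫ f.map α) :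
    f.map (cartLift f hα τ' g h) = g := (hα τ' g h).choose_spec.1.1

lemma cartLift_fac {a' a y : A} {α : a' ⟶ a} (hα : IsCartesian f α)
    (τ' : y ⟶ a) (g : f.obj y ⟶ f.obj a') (h : f.map τ' = g ≫ f.map α) :
    cartLift f hα τ' g h ≫ α = τ' := (hα τ' g h).choose_spec.1.2

lemma cartLift_uniq {a' a y : A} {α : a' ⟶ a} (hα : IsCartesian f α)
    (τ' : y ⟶ a) (g : f.obj y ⟶ f.obj a') (h : f.map τ' = g ≫ f.map α)
    (τ : y ⟶ a') (h1 : f.map τ = g) (h2 : τ ≫ α = τ') :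
    τ = cartLift f hα τ' g h := (hα τ' g h).choose_spec.2 τ ⟨h1, h2⟩

variable (hF : IsGrothendieckFibration f)

/-- Chosen domain of a cartesian lift. -/
noncomputable def liftObj (x : Comma (𝟭 B) f) : A := (hF x.right x.left x.hom).choose

/-- Chosen cartesian lift. -/
noncomputable def liftHom (x : Comma (𝟭 B) f) : liftObj f hF x ⟶ x.right :=
  (hF x.right x.left x.hom).choose_spec.choose

lemma liftObj_eq (x : Comma (𝟭 B) f) : f.obj (liftObj f hF x) = x.left :=
  (hF x.right x.left x.hom).choose_spec.choose_spec.choose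

lemma liftHom_map (x : Comma (𝟭 B) f) :
    f.map (liftHom f hF x) = eqToHom (liftObj_eq f hF x) ≫ x.hom :=
  (hF x.right x.left x.hom).choose_spec.choose_spec.choose_spec.1

lemma liftHom_cart (x : Comma (𝟭 B) f) : IsCartesian f (liftHom f hF x) :=
  (hF x.right x.left x.hom).choose_spec.choose_spec.choose_spec.2

lemma rmap_aux {x y : Comma (𝟭 B) f} (u : x ⟶ y) :
    f.map (liftHom f hF x ≫ u.right) =
      (eqToHom (liftObj_eq f hF x) ≫ u.left ≫ eqToHom (liftObj_eq f hF y).symm) ≫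
        f.map (liftHom f hF y) := by
  have w := u.w
  simp only [Functor.id_obj, Functor.id_map] at w
  simp [liftHom_map, ← w]

/-- Action of the right adjoint on morphisms. -/
noncomputable def rmap {x y : Comma (𝟭 B) f} (u : x ⟶ y) :
    liftObj f hF x ⟶ liftObj f hF y :=
  cartLift f (liftHom_cart f hF y) _ _ (rmap_aux f hF u)

lemma rmap_map {x y : Comma (𝟭 B) f} (u : x ⟶ y) :
    f.map (rmap f hF u) =
      eqToHom (liftObj_eq f hF x) ≫ u.left ≫ eqToHom (liftObj_eq f hF y).symm :=
  cartLift_map _ _ _ _ _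

lemma rmap_fac {x y : Comma (𝟭 B) f} (u : x ⟶ y) :
    rmap f hF u ≫ liftHom f hF y = liftHom f hF x ≫ u.right :=
  cartLift_fac _ _ _ _ _

lemma rmap_uniq {x y : Comma (𝟭 B) f} (u : x ⟶ y) (τ : liftObj f hF x ⟶ liftObj f hF y)
    (h1 : f.map τ = eqToHom (liftObj_eq f hF x) ≫ u.left ≫ eqToHom (liftObj_eq f hF y).symm)
    (h2 : τ ≫ liftHom f hF y = liftHom f hF x ≫ u.right) :
    τ = rmap f hF u :=
  cartLift_uniq f (liftHom_cart f hF y) _ _ (rmap_aux f hF u) τ h1 h2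

/-- The right adjoint of `vF f`. -/
@[reducible] noncomputable def rFun : Comma (𝟭 B) f ⥤ A where
  obj := liftObj f hF
  map u := rmap f hF u
  map_id x := (rmap_uniq f hF (𝟙 x) (𝟙 _) (by simp) (by simp)).symm
  map_comp {x y z} u v :=
    (rmap_uniq f hF (u ≫ v) (rmap f hF u ≫ rmap f hF v)
      (by simp [rmap_map])
      (by rw [Category.assoc, rmap_fac, ← Category.assoc, rmap_fac]; simp)).symm

lemma homEquiv_aux {a : A} {x : Comma (𝟭 B) f} (m : (vF f).obj a ⟶ x) :
    f.map m.right = (m.left ≫ eqToHom (liftObj_eq f hF x).symm) ≫ f.map (liftHom f hF x) := by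
  have w := m.w
  simp only [vF, Functor.id_obj, Functor.id_map, Category.id_comp] at w
  simp [liftHom_map, ← w]
  exact w.symm

/-- The underlying function of the hom equivalence. -/
noncomputable def adjToFun {a : A} {x : Comma (𝟭 B) f} (m : (vF f).obj a ⟶ x) :
    a ⟶ liftObj f hF x :=
  cartLift f (liftHom_cart f hF x) m.right (m.left ≫ eqToHom (liftObj_eq f hF x).symm)
    (homEquiv_aux f hF m)

lemma adjToFun_map {a : A} {x : Comma (𝟭 B) f} (m : (vF f).obj a ⟶ x) :
    f.map (adjToFun f hF m) = m.left ≫ eqToHom (liftObj_eq f hF x).symm :=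
  cartLift_map _ _ _ _ _

lemma adjToFun_fac {a : A} {x : Comma (𝟭 B) f} (m : (vF f).obj a ⟶ x) :
    adjToFun f hF m ≫ liftHom f hF x = m.right :=
  cartLift_fac _ _ _ _ _

lemma adjToFun_uniq {a : A} {x : Comma (𝟭 B) f} (m : (vF f).obj a ⟶ x)
    (τ : a ⟶ liftObj f hF x) (h1 : f.map τ = m.left ≫ eqToHom (liftObj_eq f hF x).symm)
    (h2 : τ ≫ liftHom f hF x = m.right) : τ = adjToFun f hF m :=
  cartLift_uniq f (liftHom_cart f hF x) _ _ (homEquiv_aux f hF m) τ h1 h2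

/-- The hom equivalence of the adjunction `vF f ⊣ rFun f hF`. -/
noncomputable def adjEquiv (a : A) (x : Comma (𝟭 B) f) :
    ((vF f).obj a ⟶ x) ≃ (a ⟶ (rFun f hF).obj x) where
  toFun m := adjToFun f hF m
  invFun τ :=
    { left := f.map τ ≫ eqToHom (liftObj_eq f hF x)
      right := τ ≫ liftHom f hF x
      w := by simp [liftHom_map, vF] }
  left_inv m := by
    apply CommaMorphism.ext
    · simp [adjToFun_map]
    · exact adjToFun_fac f hF m
  right_inv τ := by
    refine ((adjToFun_uniq f hF _ τ ?_ ?_)).symm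
    · erw [Category.assoc, eqToHom_trans, eqToHom_refl, Category.comp_id]
    · rfl

/-- The adjunction `vF f ⊣ rFun f hF`. -/
noncomputable def adjF : vF f ⊣ rFun f hF :=
  Adjunction.mkOfHomEquiv
    { homEquiv := adjEquiv f hF
      homEquiv_naturality_left_symm := by
        intro a' a x u τ
        apply CommaMorphism.ext <;> simp [adjEquiv, vF] <;> erw [Equiv.coe_fn_mk, Equiv.coe_fn_mk] <;> simp
      homEquiv_naturality_right := by
        intro a x y m u
        show adjToFun f hF (m ≫ u) = adjToFun f hF m ≫ rmap f hF u
        refine (adjToFun_uniq f hF (m ≫ u) _ ?_ ?_).symm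
        · rw [Functor.map_comp, adjToFun_map, rmap_map]
          erw [Category.assoc, eqToHom_trans_assoc, eqToHom_refl, Category.id_comp]
          erw [Comma.comp_left, Category.assoc]
          rfl
        · rw [Category.assoc, rmap_fac, ← Category.assoc, adjToFun_fac]
          rfl }

lemma adjF_unit_map (a : A) :
    f.map ((adjF f hF).unit.app a) = eqToHom (liftObj_eq f hF ((vF f).obj a)).symm := by
  have h : (adjF f hF).unit.app a = adjToFun f hF (𝟙 ((vF f).obj a)) := rfl
  rw [h, adjToFun_map]
  simp [vF]

lemma adjF_counit_left (x : Comma (𝟭 B) f) :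
    ((adjF f hF).counit.app x).left = eqToHom (liftObj_eq f hF x) := by
  have h : ((adjF f hF).counit.app x).left =
      f.map (𝟙 ((rFun f hF).obj x)) ≫ eqToHom (liftObj_eq f hF x) := rfl
  rw [h, CategoryTheory.Functor.map_id, Category.id_comp]

end Aux

/-- `f` is a Grothendieck fibration iff `v_f : A ⥤ B ↓ f` admits a right adjoint `r` which is a
functor over `B` (`f ∘ r = R f`, where `R f : B ↓ f ⥤ B` is the projection, and
`R f ∘ v_f = f`), with unit and counit vertical over `B`. -/
theorem stmt9 (f : A ⥤ B) :
    IsGrothendieckFibration f ↔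
      ∃ (r : Comma (𝟭 B) f ⥤ A) (adj : vF f ⊣ r)
        (hvf : vF f ⋙ Comma.fst (𝟭 B) f = f)
        (hr : r ⋙ f = Comma.fst (𝟭 B) f)
        (hu : 𝟭 A ⋙ f = (vF f ⋙ r) ⋙ f)
        (hc : (r ⋙ vF f) ⋙ Comma.fst (𝟭 B) f =
          𝟭 (Comma (𝟭 B) f) ⋙ Comma.fst (𝟭 B) f),
        Functor.whiskerRight adj.unit f = eqToHom hu ∧
          Functor.whiskerRight adj.counit (Comma.fst (𝟭 B) f) = eqToHom hc := by
  constructor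
  · intro hF
    have hvf : vF f ⋙ Comma.fst (𝟭 B) f = f := rfl
    have hr : rFun f hF ⋙ f = Comma.fst (𝟭 B) f := by
      refine CategoryTheory.Functor.ext (fun x => liftObj_eq f hF x) ?_
      intro x y u
      simpa using rmap_map f hF u
    have hu : 𝟭 A ⋙ f = (vF f ⋙ rFun f hF) ⋙ f := by
      rw [Functor.id_comp, Functor.assoc, hr, hvf]
    have hc : (rFun f hF ⋙ vF f) ⋙ Comma.fst (𝟭 B) f =
        𝟭 (Comma (𝟭 B) f) ⋙ Comma.fst (𝟭 B) f := by
      rw [Functor.assoc, hvf, Functor.id_comp, hr]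
    refine ⟨rFun f hF, adjF f hF, hvf, hr, hu, hc, ?_, ?_⟩
    · refine NatTrans.ext (funext fun a => ?_)
      rw [Functor.whiskerRight_app, adjF_unit_map, eqToHom_app]
      rfl
    · refine NatTrans.ext (funext fun x => ?_)
      rw [Functor.whiskerRight_app, eqToHom_app]
      exact adjF_counit_left f hF x
  · rintro ⟨r, adj, hvf, hr, hu, hc, hunit, hcounit⟩
    intro a b β
    let x : Comma (𝟭 B) f := { left := b, right := a, hom := β }
    have hobj : f.obj (r.obj x) = b := Functor.congr_obj hr x
    have hleft : (adj.counit.app x).left = eqToHom hobj := by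
      have h := congrFun (congrArg NatTrans.app hcounit) x
      rw [Functor.whiskerRight_app, eqToHom_app] at h
      exact h
    have hw := (adj.counit.app x).w
    simp only [Functor.comp_obj, Functor.id_obj, Functor.id_map, vF, hleft] at hw
    have hmapα : f.map (adj.counit.app x).right = eqToHom hobj ≫ β := by
      have h := hw.symm
      rw [Category.id_comp] at h
      exact h
    have key : ∀ {y : A} (τ0 : y ⟶ r.obj x),
        (vF f).map τ0 ≫ adj.counit.app x = (adj.homEquiv y x).symm τ0 := by
      intro y τ0
      rw [Adjunction.homEquiv_counit]
    refine ⟨r.obj x, (adj.counit.app x).right, hobj, hmapα, ?_⟩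
    intro y τ' g hg
    have wm : (𝟭 B).map (g ≫ eqToHom hobj) ≫ x.hom = ((vF f).obj y).hom ≫ f.map τ' := by
      simp [vF, hg, hmapα]
      erw [hmapα]
    let m : (vF f).obj y ⟶ x := { left := g ≫ eqToHom hobj, right := τ', w := wm }
    have hsymm : (vF f).map ((adj.homEquiv y x) m) ≫ adj.counit.app x = m :=
      (key _).trans ((adj.homEquiv y x).symm_apply_apply m)
    have hL := congrArg CommaMorphism.left hsymm
    have hR := congrArg CommaMorphism.right hsymm
    simp only [Comma.comp_left, Comma.comp_right, vF, hleft] at hL hR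
    refine ⟨(adj.homEquiv y x) m, ⟨?_, hR⟩, ?_⟩
    · have h' : f.map ((adj.homEquiv y x) m) ≫ eqToHom hobj = g ≫ eqToHom hobj := hL
      have h'' := congrArg (fun t => t ≫ eqToHom hobj.symm) h'
      simpa using h''
    · rintro τ ⟨h1, h2⟩
      apply (adj.homEquiv y x).symm.injective
      rw [Equiv.symm_apply_apply, ← key τ]
      apply CommaMorphism.ext
      · show f.map τ ≫ (adj.counit.app x).left = m.left
        rw [hleft, h1]
        rfl
      · exact h2
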